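/- Quasi-periodic monotonicity lemma: let V ∈ L^∞(0,1) be real-valued, λ ∈ ℝ, and ϑ ∈ (0, 2π) with ϑ ≠ π. Suppose u ∈ H²(0,1), u ≢ 0, solves −u'' + V u = λ u on (0,1) and satisfies the quasi-periodic boundary conditions u(1) = e^{iϑ} u(0) and u'(1) = e^{iϑ} u'(0). Then Im(u'(0) · conj(u(0))) ≠ 0. -/

import Mathlib

open MeasureTheory

open Set intervalIntegral

-- auxiliary: conj of an interval integral
lemma intervalIntegral_conj' {f : ℝ → ℂ} {a b : ℝ} :
    (∫ t in a..b, (starRingEnd ℂ) (f t)) = (starRingEnd ℂ) (∫ t in a..b, f t) := by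
  rw [intervalIntegral, intervalIntegral, integral_conj, integral_conj, map_sub]

noncomputable def Lconj (a : ℂ) : ℂ →L[ℝ] ℂ :=
  (starRingEnd ℂ) a • (ContinuousLinearMap.id ℝ ℂ) - a • Complex.conjCLE.toContinuousLinearMap

lemma Lconj_apply (a z : ℂ) : Lconj a z = (starRingEnd ℂ) a * z - a * (starRingEnd ℂ) z := by
  simp [Lconj, Complex.conjCLE_apply, smul_eq_mul]



lemma ivp_zero (M : ℝ) (hM : 0 ≤ M) (u u' w : ℝ → ℂ)
    (hu : ∀ x ∈ Icc (0:ℝ) 1, HasDerivWithinAt u (u' x) (Icc 0 1) x)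
    (hu0 : u 0 = 0)
    (hAC : ∀ x ∈ Icc (0:ℝ) 1, u' x = ∫ t in (0:ℝ)..x, w t)
    (hwint : IntervalIntegrable w volume 0 1)
    (hbound : ∀ᵐ x ∂(volume.restrict (Ioo (0:ℝ) 1)), ‖w x‖ ≤ M * ‖u x‖) :
    ∀ x ∈ Icc (0:ℝ) 1, u x = 0 := by
  have hucont : ContinuousOn u (Icc (0:ℝ) 1) := fun x hx => (hu x hx).continuousWithinAt
  have hIcc : uIcc (0:ℝ) 1 = Icc 0 1 := uIcc_of_le zero_le_one
  have hprimcont : ContinuousOn (fun x => ∫ t in (0:ℝ)..x, w t) (Icc (0:ℝ) 1) := by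
    have := continuousOn_primitive_interval' hwint (a := 0) (by rw [hIcc]; exact ⟨le_refl 0, zero_le_one⟩)
    rwa [hIcc] at this
  have hu'cont : ContinuousOn u' (Icc (0:ℝ) 1) := hprimcont.congr hAC
  set φ : ℝ → ℝ := fun t => ‖u t‖ + ‖u' t‖ with hφ
  have hφcont : ContinuousOn φ (Icc (0:ℝ) 1) := (hucont.norm.add hu'cont.norm)
  have hφnonneg : ∀ t, 0 ≤ φ t := fun t => add_nonneg (norm_nonneg _) (norm_nonneg _)
  have hsub : ∀ x ∈ Icc (0:ℝ) 1, Icc (0:ℝ) x ⊆ Icc (0:ℝ) 1 := fun x hx =>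
    Icc_subset_Icc le_rfl hx.2
  have hφint : ∀ x ∈ Icc (0:ℝ) 1, IntervalIntegrable φ volume 0 x := fun x hx => by
    apply (hφcont.mono (hsub x hx)).intervalIntegrable_of_Icc hx.1
  have huint : ∀ x ∈ Icc (0:ℝ) 1, IntervalIntegrable (fun t => ‖u t‖) volume 0 x := fun x hx =>
    (hucont.norm.mono (hsub x hx)).intervalIntegrable_of_Icc hx.1
  have hu'int : ∀ x ∈ Icc (0:ℝ) 1, IntervalIntegrable (fun t => ‖u' t‖) volume 0 x := fun x hx =>
    (hu'cont.norm.mono (hsub x hx)).intervalIntegrable_of_Icc hx.1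
  set f : ℝ → ℝ := fun x => ∫ t in (0:ℝ)..x, φ t with hf
  -- ∫₀ˣ ‖u'‖ ≤ f x, ∫₀ˣ ‖u‖ ≤ f x
  have hle1 : ∀ x ∈ Icc (0:ℝ) 1, (∫ t in (0:ℝ)..x, ‖u' t‖) ≤ f x := fun x hx =>
    integral_mono_on hx.1 (hu'int x hx) (hφint x hx) (fun t _ => le_add_of_nonneg_left (norm_nonneg _))
  have hle2 : ∀ x ∈ Icc (0:ℝ) 1, (∫ t in (0:ℝ)..x, ‖u t‖) ≤ f x := fun x hx =>
    integral_mono_on hx.1 (huint x hx) (hφint x hx) (fun t _ => le_add_of_nonneg_right (norm_nonneg _))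
  -- ‖u x‖ ≤ ∫₀ˣ ‖u'‖
  have key1 : ∀ x ∈ Icc (0:ℝ) 1, ‖u x‖ ≤ ∫ t in (0:ℝ)..x, ‖u' t‖ := by
    intro x hx
    have hfd : ∀ t ∈ Ioo (0:ℝ) x, HasDerivWithinAt u (u' t) (Ioi t) t := by
      intro t ht
      have ht1 : t ∈ Icc (0:ℝ) 1 := ⟨ht.1.le, ht.2.le.trans hx.2⟩
      by_cases htlt : t < 1
      · exact (((hu t ht1).hasDerivAt (Icc_mem_nhds ht.1 htlt)).hasDerivWithinAt)
      · exact absurd (ht.2.trans_le hx.2) (by simpa using htlt)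
    have heq : (∫ t in (0:ℝ)..x, u' t) = u x - u 0 :=
      integral_eq_sub_of_hasDeriv_right_of_le hx.1 (hucont.mono (hsub x hx)) hfd
        ((hu'cont.mono (hsub x hx)).intervalIntegrable_of_Icc hx.1)
    rw [hu0, sub_zero] at heq
    calc ‖u x‖ = ‖∫ t in (0:ℝ)..x, u' t‖ := by rw [heq]
      _ ≤ ∫ t in (0:ℝ)..x, ‖u' t‖ := norm_integral_le_integral_norm hx.1
  -- ‖u' x‖ ≤ M * ∫₀ˣ ‖u‖
  have key2 : ∀ x ∈ Icc (0:ℝ) 1, ‖u' x‖ ≤ M * ∫ t in (0:ℝ)..x, ‖u t‖ := by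
    intro x hx
    have hbd' : ∀ᵐ t ∂volume, t ∈ Ioo (0:ℝ) 1 → ‖w t‖ ≤ M * ‖u t‖ :=
      (ae_restrict_iff' measurableSet_Ioo).mp hbound
    have h01 : (volume : Measure ℝ) {0, 1} = 0 :=
      Set.Countable.measure_zero ((Set.countable_singleton 1).insert 0) _
    have hzero : ∀ᵐ t : ℝ ∂volume, t ≠ 0 ∧ t ≠ 1 := by
      rw [ae_iff]
      apply measure_mono_null _ h01
      intro t ht
      simp only [Set.mem_setOf_eq, not_and_or, not_not] at ht
      simpa using ht
    have hbdIcc : (fun t => ‖w t‖) ≤ᵐ[volume.restrict (Icc 0 x)] fun t => M * ‖u t‖ := by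
      rw [Filter.EventuallyLE, ae_restrict_iff' measurableSet_Icc]
      filter_upwards [hbd', hzero] with t h1 h2 ht
      apply h1
      constructor
      · exact lt_of_le_of_ne ht.1 (Ne.symm h2.1)
      · exact lt_of_le_of_ne (ht.2.trans hx.2) h2.2
    have hwx : IntervalIntegrable w volume 0 x :=
      hwint.mono_set (by rw [hIcc, uIcc_of_le hx.1]; exact hsub x hx)
    calc ‖u' x‖ = ‖∫ t in (0:ℝ)..x, w t‖ := by rw [hAC x hx]
      _ ≤ ∫ t in (0:ℝ)..x, ‖w t‖ := norm_integral_le_integral_norm hx.1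
      _ ≤ ∫ t in (0:ℝ)..x, M * ‖u t‖ :=
          integral_mono_ae_restrict hx.1 hwx.norm ((huint x hx).const_mul M) hbdIcc
      _ = M * ∫ t in (0:ℝ)..x, ‖u t‖ := integral_const_mul M _
  -- f is continuous and has right derivative φ
  have hfcont : ContinuousOn f (Icc (0:ℝ) 1) := by
    have := continuousOn_primitive_interval' (hφint 1 ⟨zero_le_one, le_refl 1⟩ : IntervalIntegrable φ volume 0 1)
      (a := 0) (by rw [hIcc]; exact ⟨le_refl 0, zero_le_one⟩)
    rwa [hIcc] at this
  have hfderiv : ∀ x ∈ Ico (0:ℝ) 1, HasDerivWithinAt f (φ x) (Ici x) x := by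
    intro x hx
    have hmem : Icc (0:ℝ) 1 ∈ nhdsWithin x (Ioi x) := Icc_mem_nhdsGT_of_mem hx
    exact integral_hasDerivWithinAt_right (hφint x ⟨hx.1, hx.2.le⟩)
      ⟨Icc 0 1, hmem, (hφcont.aestronglyMeasurable measurableSet_Icc)⟩
      ((hφcont x ⟨hx.1, hx.2.le⟩).mono_of_mem_nhdsWithin hmem)
  -- Gronwall bound
  have hfbound : ∀ x ∈ Ico (0:ℝ) 1, ‖φ x‖ ≤ (M + 1) * ‖f x‖ + 0 := by
    intro x hx
    have hx' : x ∈ Icc (0:ℝ) 1 := ⟨hx.1, hx.2.le⟩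
    have hf_nonneg : 0 ≤ f x := intervalIntegral.integral_nonneg hx.1 (fun t _ => hφnonneg t)
    rw [Real.norm_of_nonneg (hφnonneg x), Real.norm_of_nonneg hf_nonneg, add_zero]
    have h1 : ‖u x‖ ≤ f x := (key1 x hx').trans (hle1 x hx')
    have h2 : ‖u' x‖ ≤ M * f x :=
      (key2 x hx').trans (mul_le_mul_of_nonneg_left (hle2 x hx') hM)
    calc φ x = ‖u x‖ + ‖u' x‖ := rfl
      _ ≤ f x + M * f x := add_le_add h1 h2
      _ = (M + 1) * f x := by ring
  have hgron := norm_le_gronwallBound_of_norm_deriv_right_le (δ := 0) (K := M + 1) (ε := 0) hfcont hfderiv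
    (by simp [hf]) hfbound
  intro x hx
  have hfx : ‖f x‖ ≤ 0 := by
    have := hgron x hx
    rwa [gronwallBound_ε0_δ0] at this
  have hfx0 : f x = 0 := by
    have := norm_eq_zero.mp (le_antisymm hfx (norm_nonneg _)); exact this
  have : ‖u x‖ ≤ 0 := by
    calc ‖u x‖ ≤ ∫ t in (0:ℝ)..x, ‖u' t‖ := key1 x hx
      _ ≤ f x := hle1 x hx
      _ = 0 := hfx0
  exact norm_eq_zero.mp (le_antisymm this (norm_nonneg _))

/-- **quasi-periodic monotonicity lemma.** Let `V ∈ L^∞(0,1)` be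
real-valued, `λ ∈ ℝ`, and `ϑ ∈ (0, 2π)` with `ϑ ≠ π`.  Suppose `u ∈ H²(0,1)`, `u ≢ 0`,
solves `−u'' + V u = λ u` on `(0,1)` (here `u'` is the continuous representative of the
derivative, absolutely continuous with derivative `w = u'' ∈ L²(0,1)`) and satisfies the
quasi-periodic boundary conditions `u(1) = e^{iϑ} u(0)` and `u'(1) = e^{iϑ} u'(0)`.
Then `Im (u'(0) ⋅ conj (u(0))) ≠ 0`. -/
theorem quasi_periodic_nonvanishing_wronskian
    (V : ℝ → ℝ)
    (hV : MemLp V ⊤ (volume.restrict (Set.Ioo (0:ℝ) 1)))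
    (lam ϑ : ℝ) (hϑ₀ : 0 < ϑ) (hϑ₂ : ϑ < 2 * Real.pi) (hϑπ : ϑ ≠ Real.pi)
    (u u' w : ℝ → ℂ)
    -- `u ∈ C¹([0,1])` with derivative `u'`
    (hu : ∀ x ∈ Set.Icc (0:ℝ) 1, HasDerivWithinAt u (u' x) (Set.Icc 0 1) x)
    -- `u' ` is absolutely continuous with derivative `w = u''`
    (hAC : ∀ x ∈ Set.Icc (0:ℝ) 1, u' x = u' 0 + ∫ t in (0:ℝ)..x, w t)
    -- `u'' ∈ L²(0,1)`
    (hw2 : MemLp w 2 (volume.restrict (Set.Ioo (0:ℝ) 1)))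
    (hwint : IntervalIntegrable w volume 0 1)
    -- the equation `−u'' + V u = λ u` a.e. on `(0,1)`
    (hODE : ∀ᵐ x ∂(volume.restrict (Set.Ioo (0:ℝ) 1)),
      -(w x) + (V x : ℂ) * u x = (lam : ℂ) * u x)
    -- `u ≢ 0`
    (hne : ∃ x ∈ Set.Icc (0:ℝ) 1, u x ≠ 0)
    -- quasi-periodic boundary conditions
    (hbc₁ : u 1 = Complex.exp (Complex.I * ϑ) * u 0)
    (hbc₂ : u' 1 = Complex.exp (Complex.I * ϑ) * u' 0) :
    (u' 0 * (starRingEnd ℂ) (u 0)).im ≠ 0 := by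
  intro him
  -- essential bound on V
  have hVfin : eLpNormEssSup V (volume.restrict (Set.Ioo (0:ℝ) 1)) ≠ ⊤ := by
    have h2 := hV.2
    rw [eLpNorm_exponent_top] at h2
    exact h2.ne
  set M0 : ℝ := (eLpNormEssSup V (volume.restrict (Set.Ioo (0:ℝ) 1))).toReal with hM0
  have hVae : ∀ᵐ x ∂(volume.restrict (Set.Ioo (0:ℝ) 1)), ‖V x‖ ≤ M0 := by
    filter_upwards [ae_le_eLpNormEssSup (f := V) (μ := volume.restrict (Set.Ioo (0:ℝ) 1))] with x hx
    have h := ENNReal.toReal_mono hVfin hx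
    simpa using h
  set M : ℝ := M0 + |lam| with hMdef
  have hM : 0 ≤ M := add_nonneg ENNReal.toReal_nonneg (abs_nonneg lam)
  have hweq : ∀ᵐ x ∂(volume.restrict (Set.Ioo (0:ℝ) 1)), w x = ((V x : ℂ) - lam) * u x := by
    filter_upwards [hODE] with x hx
    have h : w x = (V x : ℂ) * u x - lam * u x := by linear_combination -hx
    rw [h]; ring
  have hVnorm : ∀ᵐ x ∂(volume.restrict (Set.Ioo (0:ℝ) 1)), ‖((V x : ℂ) - lam)‖ ≤ M := by
    filter_upwards [hVae] with x hx
    calc ‖((V x : ℂ) - (lam:ℂ))‖ ≤ ‖(V x : ℂ)‖ + ‖(lam : ℂ)‖ := norm_sub_le _ _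
      _ ≤ M0 + |lam| := by
          rw [Complex.norm_real, Complex.norm_real]
          exact add_le_add hx (le_of_eq (Real.norm_eq_abs lam))
  -- phase factor a
  obtain ⟨a, ha, hima, himb⟩ : ∃ a : ℂ, a ≠ 0 ∧ ((starRingEnd ℂ) a * u 0).im = 0 ∧
      ((starRingEnd ℂ) a * u' 0).im = 0 := by
    by_cases h0 : u 0 = 0
    · by_cases h0' : u' 0 = 0
      · exact ⟨1, one_ne_zero, by simp [h0], by simp [h0']⟩
      · refine ⟨u' 0, h0', by simp [h0], ?_⟩
        rw [mul_comm, Complex.mul_conj]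
        simp
    · refine ⟨u 0, h0, ?_, ?_⟩
      · rw [mul_comm, Complex.mul_conj]; simp
      · rw [mul_comm]; exact him
  -- the conjugation difference g
  set g : ℝ → ℂ := fun x => (starRingEnd ℂ) a * u x - a * (starRingEnd ℂ) (u x) with hgdef
  set g' : ℝ → ℂ := fun x => (starRingEnd ℂ) a * u' x - a * (starRingEnd ℂ) (u' x) with hg'def
  set wg : ℝ → ℂ := fun x => (starRingEnd ℂ) a * w x - a * (starRingEnd ℂ) (w x) with hwgdef
  have hgfun : ∀ x, g x = Lconj a (u x) := fun x => (Lconj_apply a (u x)).symm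
  have hgderiv : ∀ x ∈ Icc (0:ℝ) 1, HasDerivWithinAt g (g' x) (Icc 0 1) x := by
    intro x hx
    exact ((hu x hx).const_mul _).sub (((hu x hx).star).const_mul a)
  have hconjzero : ∀ z : ℂ, ((starRingEnd ℂ) a * z).im = 0 →
      (starRingEnd ℂ) a * z - a * (starRingEnd ℂ) z = 0 := by
    intro z hz
    have h1 : (starRingEnd ℂ) ((starRingEnd ℂ) a * z) = a * (starRingEnd ℂ) z := by
      rw [map_mul, Complex.conj_conj]
    have h2 : (starRingEnd ℂ) ((starRingEnd ℂ) a * z) = (starRingEnd ℂ) a * z :=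
      Complex.conj_eq_iff_im.mpr hz
    rw [← h1, h2, sub_self]
  have hg0 : g 0 = 0 := hconjzero (u 0) hima
  have hg'0 : g' 0 = 0 := hconjzero (u' 0) himb
  have hgAC : ∀ x ∈ Icc (0:ℝ) 1, g' x = ∫ t in (0:ℝ)..x, wg t := by
    intro x hx
    have hwx : IntervalIntegrable w volume 0 x :=
      hwint.mono_set (by rw [uIcc_of_le zero_le_one, uIcc_of_le hx.1]; exact Icc_subset_Icc le_rfl hx.2)
    have h1 : (∫ t in (0:ℝ)..x, wg t) = Lconj a (∫ t in (0:ℝ)..x, w t) := by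
      rw [← (Lconj a).intervalIntegral_comp_comm hwx]
      exact intervalIntegral.integral_congr (fun t _ => (Lconj_apply a (w t)).symm)
    rw [h1, Lconj_apply]
    have h2 := hAC x hx
    have h4 : (starRingEnd ℂ) a * u' 0 - a * (starRingEnd ℂ) (u' 0) = 0 := hconjzero (u' 0) himb
    simp only [hg'def, h2, map_add]
    linear_combination h4
  have hwgint : IntervalIntegrable wg volume 0 1 := by
    have h : (fun t => Lconj a (w t)) = wg := funext fun t => Lconj_apply a (w t)
    exact h ▸ ⟨(Lconj a).integrable_comp hwint.1, (Lconj a).integrable_comp hwint.2⟩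
  have hwgeq : ∀ᵐ x ∂(volume.restrict (Set.Ioo (0:ℝ) 1)), wg x = ((V x : ℂ) - lam) * g x := by
    filter_upwards [hweq] with x hx
    simp only [hwgdef, hgdef, hx, map_sub, map_mul, Complex.conj_ofReal]
    ring
  have hwgbound : ∀ᵐ x ∂(volume.restrict (Set.Ioo (0:ℝ) 1)), ‖wg x‖ ≤ M * ‖g x‖ := by
    filter_upwards [hwgeq, hVnorm] with x hx hV'
    rw [hx, norm_mul]
    exact mul_le_mul_of_nonneg_right hV' (norm_nonneg _)
  have hgzero := ivp_zero M hM g g' wg hgderiv hg0 hgAC hwgint hwgbound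
  -- g' 1 = 0 as well
  have hg'1 : g' 1 = 0 := by
    rw [hgAC 1 ⟨zero_le_one, le_refl 1⟩]
    have h01 : (volume : Measure ℝ) {(1:ℝ)} = 0 := Real.volume_singleton
    have hone : ∀ᵐ t : ℝ ∂volume, t ≠ 1 := by
      rw [ae_iff]
      apply measure_mono_null _ h01
      intro t ht
      simp only [Set.mem_setOf_eq, not_not] at ht
      simp [ht]
    have hae : ∀ᵐ t ∂volume, t ∈ Set.uIoc (0:ℝ) 1 → wg t = 0 := by
      have hmem := (ae_restrict_iff' measurableSet_Ioo).mp hwgeq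
      filter_upwards [hmem, hone] with t h1 h2 ht
      rw [Set.uIoc_of_le zero_le_one] at ht
      have htIoo : t ∈ Ioo (0:ℝ) 1 := ⟨ht.1, lt_of_le_of_ne ht.2 h2⟩
      rw [h1 htIoo, hgzero t ⟨ht.1.le, ht.2⟩, mul_zero]
    rw [intervalIntegral.integral_congr_ae hae]
    simp
  -- realness of conj a * u and conj a * u' at relevant points
  have hreal : ∀ x ∈ Icc (0:ℝ) 1, ((starRingEnd ℂ) a * u x).im = 0 := by
    intro x hx
    rw [← Complex.conj_eq_iff_im, map_mul, Complex.conj_conj]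
    exact (sub_eq_zero.mp (hgzero x hx)).symm
  have hreal' : ((starRingEnd ℂ) a * u' 1).im = 0 := by
    rw [← Complex.conj_eq_iff_im, map_mul, Complex.conj_conj]
    exact (sub_eq_zero.mp hg'1).symm
  -- sin ϑ ≠ 0
  have hsin : Real.sin ϑ ≠ 0 := by
    rcases lt_trichotomy ϑ Real.pi with h | h | h
    · exact (Real.sin_pos_of_pos_of_lt_pi hϑ₀ h).ne'
    · exact absurd h hϑπ
    · have hlt : 0 < Real.sin (ϑ - Real.pi) :=
        Real.sin_pos_of_pos_of_lt_pi (by linarith) (by linarith)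
      rw [Real.sin_sub_pi] at hlt
      linarith
  have hexp_im : (Complex.exp (Complex.I * ϑ)).im = Real.sin ϑ := by
    rw [mul_comm]; exact Complex.exp_ofReal_mul_I_im ϑ
  have hkey : ∀ z0 z1 : ℂ, z1 = Complex.exp (Complex.I * ϑ) * z0 → z0.im = 0 → z1.im = 0 → z0 = 0 := by
    intro z0 z1 h hz0 hz1
    have him1 : (Complex.exp (Complex.I * ϑ) * z0).im = Real.sin ϑ * z0.re := by
      rw [Complex.mul_im, hz0, hexp_im]; ring
    have hmul : Real.sin ϑ * z0.re = 0 := by rw [← him1, ← h, hz1]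
    have hre : z0.re = 0 := by
      rcases mul_eq_zero.mp hmul with h' | h'
      · exact absurd h' hsin
      · exact h'
    exact Complex.ext hre hz0
  have hanz : (starRingEnd ℂ) a ≠ 0 := by simpa using ha
  have hu00 : u 0 = 0 := by
    have h0 : (starRingEnd ℂ) a * u 0 = 0 :=
      hkey _ ((starRingEnd ℂ) a * u 1) (by rw [hbc₁]; ring) hima (hreal 1 ⟨zero_le_one, le_refl 1⟩)
    rcases mul_eq_zero.mp h0 with h | h
    · exact absurd h hanz
    · exact h
  have hu'00 : u' 0 = 0 := by
    have h0 : (starRingEnd ℂ) a * u' 0 = 0 :=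
      hkey _ ((starRingEnd ℂ) a * u' 1) (by rw [hbc₂]; ring) himb hreal'
    rcases mul_eq_zero.mp h0 with h | h
    · exact absurd h hanz
    · exact h
  -- now u itself has zero initial data, hence vanishes
  have hACu : ∀ x ∈ Icc (0:ℝ) 1, u' x = ∫ t in (0:ℝ)..x, w t := by
    intro x hx
    rw [hAC x hx, hu'00, zero_add]
  have hwbound : ∀ᵐ x ∂(volume.restrict (Set.Ioo (0:ℝ) 1)), ‖w x‖ ≤ M * ‖u x‖ := by
    filter_upwards [hweq, hVnorm] with x hx hV'
    rw [hx, norm_mul]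
    exact mul_le_mul_of_nonneg_right hV' (norm_nonneg _)
  have huzero := ivp_zero M hM u u' w hu hu00 hACu hwint hwbound
  obtain ⟨x, hx, hxne⟩ := hne
  exact hxne (huzero x hx)
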